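/- In the group G = ⟨z, y | z^{n+1}y^{n²} = 1, [y, z^k] = 1, (zy⁻¹)^k yⁿ z y⁻¹ = z^k⟩, the element z^k is central, and the quotient of G by the normal closures of z^k and yⁿ is the triangle group T_{j,n,k+1} = ⟨z, y | z^j = yⁿ = (zy⁻¹)^{k+1} = 1⟩, where j = gcd(n + 1, k). -/

import Mathlib

/-- `G = ⟨z, y | z^{n+1} y^{n²} = 1, [y, z^k] = 1, (zy⁻¹)^k yⁿ z y⁻¹ = z^k⟩`,
generators `z = of 0`, `y = of 1`. -/
def relsFam4 (n k : ℕ) : Set (FreeGroup (Fin 2)) :=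
  let z := FreeGroup.of (0 : Fin 2)
  let y := FreeGroup.of (1 : Fin 2)
  {z ^ (n + 1) * y ^ (n ^ 2),
   y * z ^ k * y⁻¹ * (z ^ k)⁻¹,
   (z * y⁻¹) ^ k * y ^ n * z * y⁻¹ * (z ^ k)⁻¹}

/-- The triangle group `T_{j,n,k+1} = ⟨z, y | z^j = yⁿ = (zy⁻¹)^{k+1} = 1⟩`. -/
def relsTjnk (j n k : ℕ) : Set (FreeGroup (Fin 2)) :=
  let z := FreeGroup.of (0 : Fin 2)
  let y := FreeGroup.of (1 : Fin 2)
  {z ^ j, y ^ n, (z * y⁻¹) ^ (k + 1)}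

section Aux

/-- Every relation maps to `1` in the presented group. -/
lemma presented_rel_one {α : Type*} {rels : Set (FreeGroup α)} {r : FreeGroup α}
    (h : r ∈ rels) : PresentedGroup.mk rels r = 1 :=
  (QuotientGroup.eq_one_iff r).mpr (Subgroup.subset_normalClosure h)

/-- In the triangle group `T_{j,n,k+1}`, all words in `relsFam4 n k`, as well as
`z^k` and `yⁿ`, map to `1`, provided `j = gcd(n+1,k)`. -/
lemma fam4_rels_in_Tjnk (n k j : ℕ) (hj : j = Nat.gcd (n + 1) k) {x : FreeGroup (Fin 2)}
    (hx : x ∈ relsFam4 n k ∪ ({FreeGroup.of (0 : Fin 2) ^ k, FreeGroup.of (1 : Fin 2) ^ n} :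
      Set (FreeGroup (Fin 2)))) :
    PresentedGroup.mk (relsTjnk j n k) x = 1 := by
  set Z : PresentedGroup (relsTjnk j n k) := PresentedGroup.mk _ (FreeGroup.of 0) with hZdef
  set Y : PresentedGroup (relsTjnk j n k) := PresentedGroup.mk _ (FreeGroup.of 1) with hYdef
  have hZ : Z ^ j = 1 := by
    have := presented_rel_one (rels := relsTjnk j n k) (r := FreeGroup.of 0 ^ j)
      (by simp [relsTjnk])
    simpa [map_pow, ← hZdef] using this
  have hY : Y ^ n = 1 := by
    have := presented_rel_one (rels := relsTjnk j n k) (r := FreeGroup.of 1 ^ n)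
      (by simp [relsTjnk])
    simpa [map_pow, ← hYdef] using this
  have hZY : (Z * Y⁻¹) ^ (k + 1) = 1 := by
    have := presented_rel_one (rels := relsTjnk j n k)
      (r := (FreeGroup.of 0 * (FreeGroup.of 1)⁻¹) ^ (k + 1)) (by simp [relsTjnk])
    simpa [map_pow, map_mul, map_inv, ← hZdef, ← hYdef] using this
  have hZk : Z ^ k = 1 := by
    obtain ⟨c, hc⟩ : j ∣ k := hj ▸ Nat.gcd_dvd_right _ _
    rw [show Z ^ k = (Z ^ j) ^ c by rw [← pow_mul, ← hc], hZ, one_pow]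
  have hZn1 : Z ^ (n + 1) = 1 := by
    obtain ⟨c, hc⟩ : j ∣ (n + 1) := hj ▸ Nat.gcd_dvd_left _ _
    rw [show Z ^ (n + 1) = (Z ^ j) ^ c by rw [← pow_mul, ← hc], hZ, one_pow]
  rcases hx with hx | hx
  · rcases hx with hx | hx | hx
    · subst hx
      rw [map_mul, map_pow, map_pow, ← hZdef, ← hYdef, hZn1, pow_two, pow_mul, hY,
        one_pow, one_mul]
    · subst hx
      simp only [map_mul, map_pow, map_inv, ← hZdef, ← hYdef]
      rw [hZk]; simp
    · subst hx
      simp only [map_mul, map_pow, map_inv, ← hZdef, ← hYdef]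
      rw [hY, hZk]
      have h1 : (Z * Y⁻¹) ^ k * Z * Y⁻¹ = 1 := by
        rw [mul_assoc, ← pow_succ]; exact hZY
      simpa using h1
  · rcases hx with hx | hx
    · subst hx; simpa [map_pow, ← hZdef] using hZk
    · simp only [Set.mem_singleton_iff] at hx; subst hx
      simpa [map_pow, ← hYdef] using hY

/-- Conversely, the relations of `T_{j,n,k+1}` map to `1` in the quotient of
`G_{(4)}` by `z^k` and `yⁿ`. -/
lemma Tjnk_rels_in_fam4 (n k j : ℕ) (hj : j = Nat.gcd (n + 1) k) {x : FreeGroup (Fin 2)}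
    (hx : x ∈ relsTjnk j n k) :
    PresentedGroup.mk (relsFam4 n k ∪
      ({FreeGroup.of (0 : Fin 2) ^ k, FreeGroup.of (1 : Fin 2) ^ n} :
        Set (FreeGroup (Fin 2)))) x = 1 := by
  set A : Set (FreeGroup (Fin 2)) := relsFam4 n k ∪
    ({FreeGroup.of (0 : Fin 2) ^ k, FreeGroup.of (1 : Fin 2) ^ n} :
      Set (FreeGroup (Fin 2))) with hA
  set Z : PresentedGroup A := PresentedGroup.mk _ (FreeGroup.of 0) with hZdef
  set Y : PresentedGroup A := PresentedGroup.mk _ (FreeGroup.of 1) with hYdef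
  have hZk : Z ^ k = 1 := by
    have := presented_rel_one (rels := A) (r := FreeGroup.of 0 ^ k) (Or.inr (Or.inl rfl))
    simpa [map_pow, ← hZdef] using this
  have hYn : Y ^ n = 1 := by
    have := presented_rel_one (rels := A) (r := FreeGroup.of 1 ^ n)
      (Or.inr (Or.inr rfl))
    simpa [map_pow, ← hYdef] using this
  have hr1 : Z ^ (n + 1) * Y ^ (n ^ 2) = 1 := by
    have := presented_rel_one (rels := A)
      (r := FreeGroup.of 0 ^ (n + 1) * FreeGroup.of 1 ^ (n ^ 2)) (Or.inl (Or.inl rfl))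
    simpa [map_mul, map_pow, ← hZdef, ← hYdef] using this
  have hZn1 : Z ^ (n + 1) = 1 := by
    have hyn2 : Y ^ (n ^ 2) = 1 := by rw [pow_two, pow_mul, hYn, one_pow]
    rwa [hyn2, mul_one] at hr1
  have hZj : Z ^ j = 1 := by
    rw [← orderOf_dvd_iff_pow_eq_one] at hZn1 hZk ⊢
    rw [hj]
    exact Nat.dvd_gcd hZn1 hZk
  have hr3 : (Z * Y⁻¹) ^ k * Y ^ n * Z * Y⁻¹ * (Z ^ k)⁻¹ = 1 := by
    have := presented_rel_one (rels := A)
      (r := (FreeGroup.of 0 * (FreeGroup.of 1)⁻¹) ^ k * FreeGroup.of 1 ^ n *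
        FreeGroup.of 0 * (FreeGroup.of 1)⁻¹ * (FreeGroup.of 0 ^ k)⁻¹)
      (Or.inl (Or.inr (Or.inr rfl)))
    simpa [map_mul, map_pow, map_inv, ← hZdef, ← hYdef] using this
  rcases hx with hx | hx | hx
  · subst hx; simpa [map_pow, ← hZdef] using hZj
  · subst hx; simpa [map_pow, ← hYdef] using hYn
  · simp only [Set.mem_singleton_iff] at hx; subst hx
    rw [hYn, mul_one, hZk] at hr3
    have h1 : (Z * Y⁻¹) ^ (k + 1) = 1 := by
      rw [pow_succ, ← mul_assoc]
      simpa using hr3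
    simpa [map_mul, map_pow, map_inv, ← hZdef, ← hYdef] using h1

end Aux

/-- In `G_{(4)}`, the element `z^k` is central, and the quotient by the normal
closure of `{z^k, yⁿ}` is the triangle group `T_{j,n,k+1}` with `j = gcd(n+1, k)`. -/
theorem stmt_16 (n k : ℕ) (j : ℕ) (hj : j = Nat.gcd (n + 1) k) :
    ((PresentedGroup.of 0 : PresentedGroup (relsFam4 n k)) ^ k ∈
      Subgroup.center (PresentedGroup (relsFam4 n k))) ∧
    Nonempty
      ((PresentedGroup (relsFam4 n k) ⧸
          Subgroup.normalClosure
            ({(PresentedGroup.of 0 : PresentedGroup (relsFam4 n k)) ^ k,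
              (PresentedGroup.of 1 : PresentedGroup (relsFam4 n k)) ^ n} :
              Set (PresentedGroup (relsFam4 n k)))) ≃*
        PresentedGroup (relsTjnk j n k)) := by
  constructor
  · -- centrality of z^k
    set zk : PresentedGroup (relsFam4 n k) := (PresentedGroup.of 0) ^ k with hzk
    have hr2 : PresentedGroup.mk (relsFam4 n k)
        (FreeGroup.of 1 * FreeGroup.of (0 : Fin 2) ^ k * (FreeGroup.of 1)⁻¹ *
          (FreeGroup.of (0 : Fin 2) ^ k)⁻¹) = 1 :=
      presented_rel_one (by simp [relsFam4])
    have hr2' : (PresentedGroup.of 1 : PresentedGroup (relsFam4 n k)) * zk *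
        (PresentedGroup.of 1)⁻¹ * zk⁻¹ = 1 := by
      exact hr2
    have hcomm : zk * PresentedGroup.of 1 = PresentedGroup.of 1 * zk := by
      have h3 : (PresentedGroup.of 1 : PresentedGroup (relsFam4 n k)) * zk *
          (PresentedGroup.of 1)⁻¹ = zk := by
        have := mul_eq_one_iff_eq_inv.mp hr2'
        simpa using this
      calc zk * PresentedGroup.of 1
          = (PresentedGroup.of 1 * zk * (PresentedGroup.of 1)⁻¹) * PresentedGroup.of 1 := by
            rw [h3]
        _ = PresentedGroup.of 1 * zk := by group
    refine Subgroup.mem_center_iff.mpr fun g => ?_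
    have hg : g ∈ Subgroup.centralizer {zk} := by
      refine PresentedGroup.generated_by (relsFam4 n k) (Subgroup.centralizer {zk}) ?_ g
      intro i
      fin_cases i
      · refine Subgroup.mem_centralizer_iff.mpr ?_
        rintro h rfl
        exact ((Commute.refl (PresentedGroup.of 0)).pow_left k).eq
      · refine Subgroup.mem_centralizer_iff.mpr ?_
        rintro h rfl
        exact hcomm
    exact (Subgroup.mem_centralizer_iff.mp hg zk rfl).symm
  · -- the isomorphism
    set S : Set (FreeGroup (Fin 2)) :=
      {FreeGroup.of (0 : Fin 2) ^ k, FreeGroup.of (1 : Fin 2) ^ n} with hS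
    set A : Set (FreeGroup (Fin 2)) := relsFam4 n k ∪ S with hA
    set N : Subgroup (FreeGroup (Fin 2)) := Subgroup.normalClosure (relsFam4 n k) with hN
    set M : Subgroup (FreeGroup (Fin 2)) := Subgroup.normalClosure A with hM
    have hNM : N ≤ M := Subgroup.normalClosure_mono Set.subset_union_left
    haveI hNn : N.Normal := hN ▸ Subgroup.normalClosure_normal
    haveI hMn : M.Normal := hM ▸ Subgroup.normalClosure_normal
    -- normalClosure A = normalClosure (relsTjnk j n k)
    have hNC : M = Subgroup.normalClosure (relsTjnk j n k) := by
      apply le_antisymm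
      · rw [hM]
        apply Subgroup.normalClosure_le_normal
        intro x hx
        exact (QuotientGroup.eq_one_iff x).mp (fam4_rels_in_Tjnk n k j hj hx)
      · apply Subgroup.normalClosure_le_normal
        intro x hx
        exact hM ▸ ((QuotientGroup.eq_one_iff x).mp (Tjnk_rels_in_fam4 n k j hj hx))
    -- identify the normal closure in the quotient with M.map (mk' N)
    have hmap : Subgroup.normalClosure
        ({(PresentedGroup.of 0 : PresentedGroup (relsFam4 n k)) ^ k,
          (PresentedGroup.of 1 : PresentedGroup (relsFam4 n k)) ^ n} :
          Set (PresentedGroup (relsFam4 n k))) = M.map (QuotientGroup.mk' N) := by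
      rw [hM, Subgroup.map_normalClosure _ _ (QuotientGroup.mk'_surjective N)]
      apply le_antisymm
      · refine @Subgroup.normalClosure_le_normal _ _ _ _ Subgroup.normalClosure_normal ?_
        rintro x (rfl | rfl)
        · exact Subgroup.subset_normalClosure
            ⟨FreeGroup.of (0 : Fin 2) ^ k, Or.inr (Or.inl rfl), by simp [map_pow]; rfl⟩
        · exact Subgroup.subset_normalClosure
            ⟨FreeGroup.of (1 : Fin 2) ^ n, Or.inr (Or.inr rfl), by simp [map_pow]; rfl⟩
      · refine @Subgroup.normalClosure_le_normal _ _ _ _ Subgroup.normalClosure_normal ?_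
        rintro _ ⟨a, ha, rfl⟩
        rcases ha with ha | ha
        · have h1 : QuotientGroup.mk' N a = 1 :=
            (QuotientGroup.eq_one_iff a).mpr (Subgroup.subset_normalClosure ha)
          rw [h1]; exact Subgroup.one_mem _
        · rcases ha with ha | ha
          · subst ha
            refine Subgroup.subset_normalClosure (Or.inl ?_)
            simp [map_pow]; rfl
          · simp only [Set.mem_singleton_iff] at ha; subst ha
            refine Subgroup.subset_normalClosure (Or.inr ?_)
            simp [map_pow]; rfl
    haveI hmapn : (Subgroup.map (QuotientGroup.mk' N) M).Normal :=
      QuotientGroup.map_normal (N := N) (M := M)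
    have e1 : (PresentedGroup (relsFam4 n k) ⧸ Subgroup.normalClosure
            ({(PresentedGroup.of 0 : PresentedGroup (relsFam4 n k)) ^ k,
              (PresentedGroup.of 1 : PresentedGroup (relsFam4 n k)) ^ n} :
              Set (PresentedGroup (relsFam4 n k)))) ≃*
        ((FreeGroup (Fin 2) ⧸ N) ⧸ Subgroup.map (QuotientGroup.mk' N) M) :=
      @QuotientGroup.quotientMulEquivOfEq _ _ _ _ Subgroup.normalClosure_normal hmapn hmap
    have e2 : ((FreeGroup (Fin 2) ⧸ N) ⧸ Subgroup.map (QuotientGroup.mk' N) M) ≃*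
        FreeGroup (Fin 2) ⧸ M := QuotientGroup.quotientQuotientEquivQuotient N M hNM
    have e3 : (FreeGroup (Fin 2) ⧸ M) ≃* PresentedGroup (relsTjnk j n k) :=
      QuotientGroup.quotientMulEquivOfEq hNC
    exact ⟨(e1.trans e2).trans e3⟩
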